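/- For 1 < α ≤ 2 and natural number n ≥ 1, the tail sum of Grünwald coefficients satisfies ∑_{k=n}^∞ G^α_{k+1} = -G^{α-1}_n, and these quantities are nonnegative; moreover ∑_{n=1}^∞ (-G^{α-1}_n) = 1, so (-G^{α-1}_n)_{n≥1} defines a probability distribution on the positive integers. -/

import Mathlib

open MeasureTheory Real Filter

/-- Grünwald coefficient `G^α_k = (-1)^k * binom(α,k)`. -/
noncomputable def grunwald (α : ℝ) (k : ℕ) : ℝ :=
  (-1 : ℝ) ^ k * ((∏ i ∈ Finset.range k, (α - i)) / (Nat.factorial k))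

lemma grunwald_prod_peel (β : ℝ) (k : ℕ) :
    ∏ i ∈ Finset.range (k+1), (β - i) = β * ∏ i ∈ Finset.range k, ((β - 1) - i) := by
  rw [Finset.prod_range_succ']
  simp only [Nat.cast_zero, sub_zero, Nat.cast_add, Nat.cast_one]
  rw [mul_comm]
  congr 1
  apply Finset.prod_congr rfl
  intro i _
  ring

lemma grunwald_succ (β : ℝ) (k : ℕ) :
    grunwald β (k+1) = (-β / (k+1)) * grunwald (β - 1) k := by
  unfold grunwald
  rw [grunwald_prod_peel, Nat.factorial_succ]
  have h1 : (Nat.factorial k : ℝ) ≠ 0 := Nat.cast_ne_zero.2 (Nat.factorial_ne_zero k)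
  have h2 : ((k:ℝ)+1) ≠ 0 := by positivity
  push_cast
  field_simp
  ring

lemma grunwald_pascal (β : ℝ) (k : ℕ) :
    grunwald β (k+1) = grunwald (β - 1) (k+1) - grunwald (β - 1) k := by
  unfold grunwald
  rw [grunwald_prod_peel β k, Finset.prod_range_succ, Nat.factorial_succ]
  have h1 : (Nat.factorial k : ℝ) ≠ 0 := Nat.cast_ne_zero.2 (Nat.factorial_ne_zero k)
  have h2 : ((k:ℝ)+1) ≠ 0 := by positivity
  push_cast
  field_simp
  ring

lemma grunwald_eq_prod (γ : ℝ) (k : ℕ) :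
    grunwald γ k = (∏ i ∈ Finset.range k, ((i:ℝ) - γ)) / (Nat.factorial k) := by
  unfold grunwald
  rw [← mul_div_assoc]
  congr 1
  have h : (-1:ℝ)^k = ∏ _i ∈ Finset.range k, (-1:ℝ) := by simp
  rw [h, ← Finset.prod_mul_distrib]
  apply Finset.prod_congr rfl
  intro i _
  ring

lemma grunwald_nonneg_of_nonpos {γ : ℝ} (hγ : γ ≤ 0) (k : ℕ) : 0 ≤ grunwald γ k := by
  rw [grunwald_eq_prod]
  apply div_nonneg _ (by positivity)
  apply Finset.prod_nonneg
  intro i _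
  have : (0:ℝ) ≤ i := Nat.cast_nonneg i
  linarith

lemma grunwald_le_one_of_nonpos {γ : ℝ} (hγ1 : -1 ≤ γ) (hγ2 : γ ≤ 0) (k : ℕ) :
    grunwald γ k ≤ 1 := by
  rw [grunwald_eq_prod]
  rw [div_le_one (by positivity)]
  calc ∏ i ∈ Finset.range k, ((i:ℝ) - γ) ≤ ∏ i ∈ Finset.range k, ((i:ℝ) + 1) := by
        apply Finset.prod_le_prod
        · intro i _; have : (0:ℝ) ≤ i := Nat.cast_nonneg i; linarith
        · intro i _; linarith
    _ = (Nat.factorial k : ℝ) := by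
        norm_cast
        exact Finset.prod_range_add_one_eq_factorial k

lemma tendsto_grunwald_beta {α : ℝ} (hα1 : 1 < α) (hα2 : α ≤ 2) :
    Tendsto (fun m => grunwald (α - 1) m) atTop (nhds 0) := by
  apply squeeze_zero_norm' (a := fun m : ℕ => α / m)
  · filter_upwards [eventually_ge_atTop 1] with m hm
    obtain ⟨k, rfl⟩ : ∃ k, m = k + 1 := ⟨m - 1, by omega⟩
    rw [grunwald_succ]
    have hγ2 : (α - 1) - 1 ≤ 0 := by linarith
    have hγ1 : -1 ≤ (α - 1) - 1 := by linarith
    have h0 : 0 ≤ grunwald (α - 1 - 1) k := grunwald_nonneg_of_nonpos hγ2 k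
    have h1 : grunwald (α - 1 - 1) k ≤ 1 := grunwald_le_one_of_nonpos hγ1 hγ2 k
    have hk : (0:ℝ) < (k:ℝ) + 1 := by positivity
    rw [Real.norm_eq_abs, abs_mul, abs_div, abs_neg, abs_of_pos (by linarith : (0:ℝ) < α - 1),
      abs_of_pos hk, abs_of_nonneg h0]
    push_cast
    calc (α - 1) / ((k:ℝ) + 1) * grunwald (α - 1 - 1) k
        ≤ (α - 1) / ((k:ℝ) + 1) * 1 := by
          apply mul_le_mul_of_nonneg_left h1 (div_nonneg (by linarith) (by positivity))
      _ ≤ α / ((k:ℝ) + 1) := by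
          rw [mul_one]
          exact (div_le_div_iff_of_pos_right hk).mpr (by linarith)
  · exact tendsto_const_div_atTop_nhds_zero_nat α

theorem grunwald_tail_prob (α : ℝ) (hα1 : 1 < α) (hα2 : α ≤ 2) :
    (∀ n : ℕ, 1 ≤ n →
      (∑' k : ℕ, grunwald α (n + k + 1)) = -grunwald (α - 1) n ∧
      0 ≤ -grunwald (α - 1) n) ∧
    ∑' n : ℕ, -grunwald (α - 1) (n + 1) = 1 := by
  have hβpos : 0 < α - 1 := by linarith
  have hγle : α - 1 - 1 ≤ 0 := by linarith
  have hγnonneg : ∀ k, 0 ≤ grunwald (α - 1 - 1) k := fun k => grunwald_nonneg_of_nonpos hγle k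
  have hβnonpos : ∀ k : ℕ, grunwald (α - 1) (k + 1) ≤ 0 := by
    intro k
    rw [grunwald_succ]
    apply mul_nonpos_of_nonpos_of_nonneg
    · apply div_nonpos_of_nonpos_of_nonneg (by linarith) (by positivity)
    · exact hγnonneg k
  have hαnonneg : ∀ k : ℕ, 0 ≤ grunwald α (k + 2) := by
    intro k
    have h : k + 2 = (k + 1) + 1 := rfl
    rw [h, grunwald_succ]
    have h1 : -α / (((k+1:ℕ):ℝ) + 1) ≤ 0 :=
      div_nonpos_of_nonpos_of_nonneg (by linarith) (by positivity)
    have h2 := hβnonpos k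
    have h3 := mul_nonneg (neg_nonneg.2 h1) (neg_nonneg.2 h2)
    rw [neg_mul_neg] at h3
    exact h3
  have hβtendsto := tendsto_grunwald_beta hα1 hα2
  have part1 : ∀ n : ℕ, 1 ≤ n →
      (∑' k : ℕ, grunwald α (n + k + 1)) = -grunwald (α - 1) n ∧
      0 ≤ -grunwald (α - 1) n := by
    intro n hn
    have hfnonneg : ∀ k, 0 ≤ grunwald α (n + k + 1) := by
      intro k
      have h : n + k + 1 = (n - 1 + k) + 2 := by omega
      rw [h]; exact hαnonneg _
    have hpart : ∀ m, ∑ k ∈ Finset.range m, grunwald α (n + k + 1)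
        = grunwald (α - 1) (n + m) - grunwald (α - 1) n := by
      intro m
      have hs := Finset.sum_range_sub (fun k => grunwald (α - 1) (n + k)) m
      simp only [Nat.add_zero] at hs
      rw [← hs]
      exact Finset.sum_congr rfl fun k _ => grunwald_pascal α (n + k)
    have hβle : ∀ m : ℕ, grunwald (α - 1) (n + m) ≤ 0 := by
      intro m
      obtain ⟨t, ht⟩ : ∃ t, n + m = t + 1 := ⟨n + m - 1, by omega⟩
      rw [ht]; exact hβnonpos t
    have hsummable : Summable (fun k => grunwald α (n + k + 1)) := by
      apply summable_of_sum_range_le hfnonneg (c := -grunwald (α - 1) n)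
      intro m
      rw [hpart m]
      linarith [hβle m]
    have h1 : Tendsto (fun m => ∑ k ∈ Finset.range m, grunwald α (n + k + 1)) atTop
        (nhds (∑' k, grunwald α (n + k + 1))) := hsummable.hasSum.tendsto_sum_nat
    have h2 : Tendsto (fun m => ∑ k ∈ Finset.range m, grunwald α (n + k + 1)) atTop
        (nhds (0 - grunwald (α - 1) n)) := by
      rw [funext hpart]
      apply Tendsto.sub_const
      have := hβtendsto.comp (tendsto_add_atTop_nat n)
      exact this.congr fun x => by simp only [Function.comp_apply, add_comm]
    refine ⟨tendsto_nhds_unique h1 (by simpa using h2), ?_⟩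
    obtain ⟨t, ht⟩ : ∃ t, n = t + 1 := ⟨n - 1, by omega⟩
    rw [ht]
    linarith [hβnonpos t]
  have hγ0 : grunwald (α - 1 - 1) 0 = 1 := by simp [grunwald]
  have hpart2 : ∀ m, ∑ n ∈ Finset.range m, -grunwald (α - 1) (n + 1)
      = 1 - grunwald (α - 1 - 1) m := by
    intro m
    have h : ∀ n : ℕ, -grunwald (α - 1) (n + 1)
        = grunwald (α - 1 - 1) n - grunwald (α - 1 - 1) (n + 1) := by
      intro n
      rw [grunwald_pascal]
      ring
    simp only [h]
    rw [Finset.sum_range_sub' (fun n => grunwald (α - 1 - 1) n) m, hγ0]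
  have hhnonneg : ∀ n : ℕ, 0 ≤ -grunwald (α - 1) (n + 1) := fun n => by linarith [hβnonpos n]
  have hsummable2 : Summable (fun n : ℕ => -grunwald (α - 1) (n + 1)) := by
    apply summable_of_sum_range_le hhnonneg (c := 1)
    intro m
    rw [hpart2 m]
    linarith [hγnonneg m]
  have hanti : Antitone (fun m => grunwald (α - 1 - 1) m) := by
    apply antitone_nat_of_succ_le
    intro m
    have h1 := grunwald_pascal (α - 1) m
    have h2 := hβnonpos m
    show grunwald (α - 1 - 1) (m + 1) ≤ grunwald (α - 1 - 1) m
    linarith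
  have hbdd : BddBelow (Set.range fun m => grunwald (α - 1 - 1) m) := by
    refine ⟨0, ?_⟩
    rintro x ⟨m, rfl⟩
    exact hγnonneg m
  have hγtendsto : Tendsto (fun m => grunwald (α - 1 - 1) m) atTop
      (nhds (⨅ m, grunwald (α - 1 - 1) m)) := tendsto_atTop_ciInf hanti hbdd
  set L := ⨅ m, grunwald (α - 1 - 1) m with hL
  have hL0 : 0 ≤ L := le_ciInf hγnonneg
  have hLle : L ≤ 0 := by
    by_contra hc
    push_neg at hc
    have hlow : ∀ m : ℕ, (α - 1) * L / ((m:ℝ) + 1) ≤ -grunwald (α - 1) (m + 1) := by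
      intro m
      rw [grunwald_succ]
      have hLm : L ≤ grunwald (α - 1 - 1) m := ciInf_le hbdd m
      have heq : -((-(α - 1) / ((m:ℕ) + 1 : ℝ)) * grunwald (α - 1 - 1) m)
          = (α - 1) / ((m:ℝ) + 1) * grunwald (α - 1 - 1) m := by ring
      rw [heq]
      have h3 : (α - 1) * L / ((m:ℝ) + 1) = (α - 1) / ((m:ℝ) + 1) * L := by ring
      rw [h3]
      exact mul_le_mul_of_nonneg_left hLm (div_nonneg hβpos.le (by positivity))
    have hs : Summable (fun m : ℕ => (α - 1) * L / ((m:ℝ) + 1)) :=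
      Summable.of_nonneg_of_le
        (fun m => div_nonneg (mul_nonneg hβpos.le hL0) (by positivity)) hlow hsummable2
    have hne : (α - 1) * L ≠ 0 := ne_of_gt (mul_pos hβpos hc)
    have hs2 : Summable (fun m : ℕ => (1:ℝ) / ((m:ℝ) + 1)) := by
      have h := hs.mul_left (((α - 1) * L)⁻¹)
      refine h.congr fun m => ?_
      rw [← mul_div_assoc, inv_mul_cancel₀ hne]
    have hs3 : Summable (fun m : ℕ => (1:ℝ) / (((m + 1 : ℕ)) : ℝ)) := by
      convert hs2 using 2 with m
      push_cast
      ring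
    exact Real.not_summable_one_div_natCast ((summable_nat_add_iff 1).mp hs3)
  have hLeq : L = 0 := le_antisymm hLle hL0
  rw [hLeq] at hγtendsto
  have h1 : Tendsto (fun m => ∑ n ∈ Finset.range m, -grunwald (α - 1) (n + 1)) atTop
      (nhds (∑' n : ℕ, -grunwald (α - 1) (n + 1))) := hsummable2.hasSum.tendsto_sum_nat
  have h2 : Tendsto (fun m => ∑ n ∈ Finset.range m, -grunwald (α - 1) (n + 1)) atTop
      (nhds 1) := by
    rw [funext hpart2]
    have := hγtendsto.const_sub 1
    simpa using this
  exact ⟨part1, tendsto_nhds_unique h1 h2⟩
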